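/- Every closed frieze pattern (a_{i,j}) of width n satisfies the glide symmetry a_{i,j} = a_{j, i+n+3} and hence is periodic of period n+3: a_{i,j} = a_{i+n+3, j+n+3}. -/
import Mathlib


/-- A closed Y-frieze pattern of width `n`: a staggered array `b i j` (row `k`
consists of entries `b i (i+k+2)`) satisfying the Y-diamond rule, with zeroth
row and `(n+1)`-th row of `0`s, a row of `-1`s below, nonzero intermediate
rows, and normalized to `0` outside the pattern. -/
structure ClosedYFrieze (n : ℕ) where
  b : ℤ → ℤ → ℚ
  diamond : ∀ i j : ℤ, 3 ≤ j - i → j - i ≤ (n : ℤ) + 3 →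
    b i j * b (i + 1) (j + 1) = (1 + b (i + 1) j) * (1 + b i (j + 1))
  topZero : ∀ i : ℤ, b i (i + 2) = 0
  botZero : ∀ i : ℤ, b i (i + (n : ℤ) + 3) = 0
  negRow : ∀ i : ℤ, b i (i + (n : ℤ) + 4) = -1
  rowsNonzero : ∀ k : ℕ, 1 ≤ k → k ≤ n → ∃ i : ℤ, b i (i + (k : ℤ) + 2) ≠ 0
  outside : ∀ i j : ℤ, j - i ≤ 1 ∨ (n : ℤ) + 5 ≤ j - i → b i j = 0

/-- All entries of the nonzero rows are positive rationals. -/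
def ClosedYFrieze.Positive {n : ℕ} (P : ClosedYFrieze n) : Prop :=
  ∀ (i : ℤ) (k : ℕ), 1 ≤ k → k ≤ n → 0 < P.b i (i + (k : ℤ) + 2)

/-- All entries of the nonzero rows are positive integers. -/
def ClosedYFrieze.Arithmetic {n : ℕ} (P : ClosedYFrieze n) : Prop :=
  ∀ (i : ℤ) (k : ℕ), 1 ≤ k → k ≤ n → ∃ m : ℕ, 0 < m ∧ P.b i (i + (k : ℤ) + 2) = (m : ℚ)

/-- A closed (Coxeter) frieze pattern of width `n`: a staggered array `a i j`
(row `k` consists of entries `a i (i+k+1)`) satisfying the diamond rule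
`a_{i,j} a_{i+1,j+1} = 1 + a_{i,j+1} a_{i+1,j}`, bounded above and below by
rows of `1`s, and normalized to `0` outside. -/
structure ClosedFrieze (n : ℕ) where
  a : ℤ → ℤ → ℚ
  diamond : ∀ i j : ℤ, 2 ≤ j - i → j - i ≤ (n : ℤ) + 1 →
    a i j * a (i + 1) (j + 1) = 1 + a i (j + 1) * a (i + 1) j
  topOne : ∀ i : ℤ, a i (i + 1) = 1
  botOne : ∀ i : ℤ, a i (i + (n : ℤ) + 2) = 1
  outside : ∀ i j : ℤ, j - i ≤ 0 ∨ (n : ℤ) + 3 ≤ j - i → a i j = 0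

/-- All entries of the interior rows are positive integers. -/
def ClosedFrieze.Arithmetic {n : ℕ} (A : ClosedFrieze n) : Prop :=
  ∀ (i : ℤ) (k : ℕ), 1 ≤ k → k ≤ n → ∃ m : ℕ, 0 < m ∧ A.a i (i + (k : ℤ) + 1) = (m : ℚ)

lemma frieze_zl {n : ℕ} (A : ClosedFrieze n) {i j : ℤ} (h : j - i ≤ 0) : A.a i j = 0 :=
  A.outside i j (Or.inl h)

lemma frieze_zr {n : ℕ} (A : ClosedFrieze n) {i j : ℤ} (h : (n:ℤ) + 3 ≤ j - i) : A.a i j = 0 :=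
  A.outside i j (Or.inr h)

lemma frieze_diamond_ext {n : ℕ} (A : ClosedFrieze n) (i j : ℤ)
    (h1 : 1 ≤ j - i) (h2 : j - i ≤ (n : ℤ) + 2) :
    A.a i j * A.a (i+1) (j+1) = 1 + A.a i (j+1) * A.a (i+1) j := by
  rcases eq_or_lt_of_le h1 with h | h
  · have hj : j = i + 1 := by omega
    subst hj
    rw [A.topOne i, show i+1+1 = (i+1)+1 by ring, A.topOne (i+1),
      frieze_zl A (show (i+1 : ℤ) - (i+1) ≤ 0 by omega)]
    ring
  · rcases eq_or_lt_of_le h2 with h' | h'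
    · have hj : j = i + (n:ℤ) + 2 := by omega
      subst hj
      rw [A.botOne i, show i+(n:ℤ)+2+1 = (i+1)+(n:ℤ)+2 by ring, A.botOne (i+1),
        frieze_zr A (show (n:ℤ) + 3 ≤ ((i+1)+(n:ℤ)+2) - i by omega)]
      ring
    · exact A.diamond i j (by omega) (by omega)

lemma frieze_colRec {n : ℕ} (A : ClosedFrieze n)
    (hpos : ∀ i j : ℤ, 1 ≤ j - i → j - i ≤ (n : ℤ) + 2 → 0 < A.a i j) :
    ∀ k : ℕ, (k : ℤ) + 1 ≤ (n : ℤ) + 2 → ∀ i : ℤ,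
      A.a i (i + k + 2) =
        A.a (i + k) (i + k + 2) * A.a i (i + k + 1) - A.a i (i + k) := by
  intro k
  induction k with
  | zero =>
    intro _ i
    rw [show i + ((0:ℕ):ℤ) + 2 = i + 2 by push_cast; ring,
      show i + ((0:ℕ):ℤ) + 1 = i + 1 by push_cast; ring,
      show i + ((0:ℕ):ℤ) = i by push_cast; ring,
      A.topOne i, frieze_zl A (show (i:ℤ) - i ≤ 0 by omega)]
    ring
  | succ k ih =>
    intro hle i
    have hle' : (k : ℤ) + 1 ≤ (n : ℤ) + 1 := by push_cast at hle; omega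
    have ih' := ih (by omega) (i + 1)
    rw [show i + 1 + (k:ℤ) = i + k + 1 by ring, show i + (k:ℤ) + 1 + 2 = i + k + 3 by ring,
      show i + (k:ℤ) + 1 + 1 = i + k + 2 by ring] at ih'
    have D1 := frieze_diamond_ext A i (i + k + 1) (by omega) (by omega)
    rw [show i + (k:ℤ) + 1 + 1 = i + k + 2 by ring] at D1
    have D2 := frieze_diamond_ext A i (i + k + 2) (by omega) (by omega)
    rw [show i + (k:ℤ) + 2 + 1 = i + k + 3 by ring] at D2
    have hP : 0 < A.a (i+1) (i + k + 2) := hpos _ _ (by omega) (by omega)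
    rw [show ((k+1 : ℕ) : ℤ) = (k:ℤ) + 1 by push_cast; ring,
      show i + ((k:ℤ) + 1) + 2 = i + k + 3 by ring,
      show i + ((k:ℤ) + 1) + 1 = i + k + 2 by ring,
      show i + ((k:ℤ) + 1) = i + k + 1 by ring]
    have key : (A.a i (i + k + 3) -
        (A.a (i + k + 1) (i + k + 3) * A.a i (i + k + 2) - A.a i (i + k + 1))) *
        A.a (i+1) (i + k + 2) = 0 := by
      linear_combination (-(1:ℚ)) * D2 + A.a i (i + k + 2) * ih' + D1
    rcases mul_eq_zero.mp key with h | h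
    · linarith [h]
    · exact absurd h hP.ne'

lemma frieze_rowRec {n : ℕ} (A : ClosedFrieze n)
    (hpos : ∀ i j : ℤ, 1 ≤ j - i → j - i ≤ (n : ℤ) + 2 → 0 < A.a i j) :
    ∀ k : ℕ, (k : ℤ) + 1 ≤ (n : ℤ) + 2 → ∀ i : ℤ,
      A.a (i - 1) (i + k + 1) =
        A.a (i - 1) (i + 1) * A.a i (i + k + 1) - A.a (i + 1) (i + k + 1) := by
  intro k
  induction k with
  | zero =>
    intro _ i
    rw [show i + ((0:ℕ):ℤ) + 1 = i + 1 by push_cast; ring,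
      A.topOne i, frieze_zl A (show (i+1:ℤ) - (i+1) ≤ 0 by omega)]
    ring
  | succ k ih =>
    intro hle i
    have hle' : (k : ℤ) + 2 ≤ (n : ℤ) + 2 := by push_cast at hle; omega
    have ih' := ih (by omega) i
    have Da := frieze_diamond_ext A (i-1) (i + k + 1) (by omega) (by omega)
    rw [show i - 1 + 1 = i by ring, show i + (k:ℤ) + 1 + 1 = i + k + 2 by ring] at Da
    have Db := frieze_diamond_ext A i (i + k + 1) (by omega) (by omega)
    rw [show i + (k:ℤ) + 1 + 1 = i + k + 2 by ring] at Db
    have hP : 0 < A.a i (i + k + 1) := hpos _ _ (by omega) (by omega)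
    rw [show ((k+1 : ℕ) : ℤ) = (k:ℤ) + 1 by push_cast; ring,
      show i + ((k:ℤ) + 1) + 1 = i + k + 2 by ring]
    have key : (A.a (i-1) (i + k + 2) -
        (A.a (i-1) (i+1) * A.a i (i + k + 2) - A.a (i+1) (i + k + 2))) *
        A.a i (i + k + 1) = 0 := by
      linear_combination (-(1:ℚ)) * Da + A.a i (i + k + 2) * ih' + Db
    rcases mul_eq_zero.mp key with h | h
    · linarith [h]
    · exact absurd h hP.ne'

lemma frieze_glide {n : ℕ} (A : ClosedFrieze n)
    (hpos : ∀ i j : ℤ, 1 ≤ j - i → j - i ≤ (n : ℤ) + 2 → 0 < A.a i j) :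
    ∀ m : ℕ, (m : ℤ) ≤ (n : ℤ) + 3 → ∀ i : ℤ,
      A.a i (i + ((n:ℤ) + 3 - m)) = A.a (i + ((n:ℤ) + 3 - m)) (i + (n:ℤ) + 3) := by
  intro m
  induction m using Nat.strong_induction_on with
  | _ m ih =>
    intro hm i
    rcases m with _ | (_ | m')
    · rw [show i + ((n:ℤ) + 3 - ((0:ℕ):ℤ)) = i + (n:ℤ) + 3 by push_cast; ring]
      rw [frieze_zr A (show (n:ℤ) + 3 ≤ (i + (n:ℤ) + 3) - i by omega),
        frieze_zl A (show (i + (n:ℤ) + 3) - (i + (n:ℤ) + 3) ≤ 0 by omega)]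
    · rw [show i + ((n:ℤ) + 3 - ((1:ℕ):ℤ)) = i + (n:ℤ) + 2 by push_cast; ring,
        A.botOne i, show i + (n:ℤ) + 3 = (i + (n:ℤ) + 2) + 1 by ring,
        A.topOne (i + (n:ℤ) + 2)]
    · have hm' : (m' : ℤ) + 2 ≤ (n:ℤ) + 3 := by push_cast at hm; omega
      rcases le_or_gt ((m':ℤ)) ((n:ℤ)) with hcase | hcase
      · -- k = n+1-m' ≥ 1
        obtain ⟨t, ht⟩ : ∃ t : ℕ, (t:ℤ) = (n:ℤ) + 1 - m' :=
          ⟨((n:ℤ) + 1 - m').toNat, Int.toNat_of_nonneg (by omega)⟩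
        have h1 := ih (m' + 1) (by omega) (by push_cast; omega) i
        rw [show i + ((n:ℤ) + 3 - ((m'+1 : ℕ):ℤ)) = i + t + 1 by push_cast; omega] at h1
        have h2 := ih m' (by omega) (by omega) i
        rw [show i + ((n:ℤ) + 3 - ((m' : ℕ):ℤ)) = i + t + 2 by omega] at h2
        have C := frieze_colRec A hpos t (by omega) i
        have R := frieze_rowRec A hpos m' (by omega) (i + t + 1)
        rw [show i + (t:ℤ) + 1 - 1 = i + t by ring,
          show i + (t:ℤ) + 1 + (m':ℤ) + 1 = i + (n:ℤ) + 3 by omega,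
          show i + (t:ℤ) + 1 + 1 = i + t + 2 by ring] at R
        rw [show i + ((n:ℤ) + 3 - ((m'+1+1 : ℕ):ℤ)) = i + t by push_cast; omega]
        linear_combination C - R + A.a (i + t) (i + t + 2) * h1 - h2
      · -- k = 0 : m' = n+1
        rw [show i + ((n:ℤ) + 3 - ((m'+1+1 : ℕ):ℤ)) = i by push_cast; omega]
        rw [frieze_zl A (show (i:ℤ) - i ≤ 0 by omega),
          frieze_zr A (show (n:ℤ) + 3 ≤ (i + (n:ℤ) + 3) - i by omega)]

/-- Every closed frieze pattern of width `n` (with positive rational entries)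
satisfies the glide symmetry `a i j = a j (i+n+3)` and hence is periodic of
period `n+3`: `a i j = a (i+n+3) (j+n+3)`. -/
theorem stmt16 (n : ℕ) (A : ClosedFrieze n)
    (hpos : ∀ i j : ℤ, 1 ≤ j - i → j - i ≤ (n : ℤ) + 2 → 0 < A.a i j) :
    ∀ i j : ℤ, 1 ≤ j - i → j - i ≤ (n : ℤ) + 2 →
      A.a i j = A.a j (i + (n : ℤ) + 3) ∧
      A.a i j = A.a (i + (n : ℤ) + 3) (j + (n : ℤ) + 3) := by
  intro i j hij1 hij2
  obtain ⟨m, hm⟩ : ∃ m : ℕ, (m:ℤ) = (n:ℤ) + 3 - (j - i) :=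
    ⟨((n:ℤ) + 3 - (j - i)).toNat, Int.toNat_of_nonneg (by omega)⟩
  have G1 := frieze_glide A hpos m (by omega) i
  rw [show i + ((n:ℤ) + 3 - (m:ℤ)) = j by omega] at G1
  obtain ⟨m2, hm2⟩ : ∃ m2 : ℕ, (m2:ℤ) = j - i :=
    ⟨(j - i).toNat, Int.toNat_of_nonneg (by omega)⟩
  have G2 := frieze_glide A hpos m2 (by omega) j
  rw [show j + ((n:ℤ) + 3 - (m2:ℤ)) = i + (n:ℤ) + 3 by omega] at G2
  exact ⟨G1, G1.trans G2⟩
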